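/- Let U ⊆ ℝⁿ be open and let f: U → ℝ be a C^∞ function such that f and 1/f are both defined and have polynomial growth at each boundary point of U (i.e., for each compact K and each derivative, the derivative is bounded on K ∩ U by C·dist(x, K \ U)^{-N} for some C, N > 0, and likewise 1/f(x) ≤ C·dist(x, K \ U)^{-N}). Then 1/f is C^∞ on U and all derivatives of 1/f have polynomial growth at each boundary point. -/

import Mathlib

open Metric Set

/-- `g` has polynomial growth at `p` relative to the open set `U ⊆ ℝⁿ`: on some compact
neighborhood `K` of `p`, `|g|` is bounded on `K ∩ U` by `C · dist(x, K \ U)^{-N}`. -/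
def HasPolyGrowthAt (n : ℕ) (U : Set (EuclideanSpace ℝ (Fin n)))
    (g : EuclideanSpace ℝ (Fin n) → ℝ) (p : EuclideanSpace ℝ (Fin n)) : Prop :=
  ∃ K : Set (EuclideanSpace ℝ (Fin n)), IsCompact K ∧ K ∈ nhds p ∧
    ∃ C N : ℝ, 0 < C ∧ 0 < N ∧
      ∀ x ∈ K ∩ U, |g x| ≤ C * Metric.infDist x (K \ U) ^ (-N)

lemma aux_iteratedDeriv_inv (i : ℕ) : ∀ y : ℝ, y ≠ 0 →
    iteratedDeriv i (Inv.inv : ℝ → ℝ) y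
      = ((-1) ^ i * ((Nat.factorial i : ℕ) : ℝ)) * y ^ (-1 - i : ℤ) := by
  induction i with
  | zero =>
    intro y hy
    simp [zpow_neg]
  | succ i ih =>
    intro y hy
    rw [iteratedDeriv_succ]
    have h1 : iteratedDeriv i (Inv.inv : ℝ → ℝ) =ᶠ[nhds y]
        fun z => ((-1) ^ i * ((Nat.factorial i : ℕ) : ℝ)) * z ^ (-1 - i : ℤ) := by
      filter_upwards [isOpen_compl_singleton.mem_nhds
        (by simpa using hy : y ∈ ({0}ᶜ : Set ℝ))] with z hz
      exact ih z hz
    rw [h1.deriv_eq, deriv_const_mul _ (differentiableAt_zpow.2 (Or.inl hy)), deriv_zpow]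
    have he : (-1 - (i : ℤ)) - 1 = -1 - ((i + 1 : ℕ) : ℤ) := by push_cast; ring
    rw [he]
    rw [Nat.factorial_succ]
    push_cast
    ring

lemma aux_norm_inv_deriv (i : ℕ) (y : ℝ) (hy : y ≠ 0) {A : ℝ} (hA : |y|⁻¹ ≤ A) :
    ‖iteratedFDeriv ℝ i (Inv.inv : ℝ → ℝ) y‖ ≤ ((Nat.factorial i : ℕ) : ℝ) * A ^ (i + 1) := by
  rw [norm_iteratedFDeriv_eq_norm_iteratedDeriv, Real.norm_eq_abs,
    aux_iteratedDeriv_inv i y hy, abs_mul, abs_mul, abs_pow, abs_neg, abs_one, one_pow, one_mul,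
    show (-1 - (i : ℤ)) = -((i + 1 : ℕ) : ℤ) by push_cast; ring, zpow_neg, zpow_natCast,
    abs_inv, abs_pow, ← inv_pow, Nat.abs_cast]
  exact mul_le_mul_of_nonneg_left (pow_le_pow_left₀ (by positivity) hA _) (by positivity)

lemma aux_polyA {n : ℕ} {U : Set (EuclideanSpace ℝ (Fin n))} (hU : IsOpen U)
    (hq : Uᶜ.Nonempty) (g : EuclideanSpace ℝ (Fin n) → ℝ)
    (h : ∀ p, HasPolyGrowthAt n U g p) (S : Set (EuclideanSpace ℝ (Fin n)))
    (hS : IsCompact S) :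
    ∃ C N : ℝ, 0 < C ∧ 0 < N ∧ ∀ x ∈ S ∩ U,
      |g x| ≤ C * (min 1 (Metric.infDist x Uᶜ)) ^ (-N) := by
  choose K hKc hKn C N hC hN hb using h
  obtain ⟨t, -, hcov⟩ := hS.elim_nhds_subcover K fun p _ => hKn p
  have hCs : (0:ℝ) ≤ ∑ p ∈ t, C p := Finset.sum_nonneg fun q _ => (hC q).le
  have hNs : (0:ℝ) ≤ ∑ p ∈ t, N p := Finset.sum_nonneg fun q _ => (hN q).le
  refine ⟨1 + ∑ p ∈ t, C p, 1 + ∑ p ∈ t, N p, by linarith, by linarith, ?_⟩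
  intro x hx
  have hex : ∃ p ∈ t, x ∈ K p := by simpa using hcov hx.1
  obtain ⟨p, hpt, hpx⟩ := hex
  have hxU : x ∈ U := hx.2
  have hδ : 0 < Metric.infDist x Uᶜ :=
    (hU.isClosed_compl.notMem_iff_infDist_pos hq).1 (by simpa using hxU)
  have hm0 : 0 < min 1 (Metric.infDist x Uᶜ) := lt_min one_pos hδ
  have hm1 : min 1 (Metric.infDist x Uᶜ) ≤ 1 := min_le_left _ _
  have step1 : Metric.infDist x (K p \ U) ^ (-(N p)) ≤
      (min 1 (Metric.infDist x Uᶜ)) ^ (-(N p)) := by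
    rcases (K p \ U).eq_empty_or_nonempty with he | hne
    · rw [he, Metric.infDist_empty, Real.zero_rpow (by simpa using (hN p).ne')]
      positivity
    · have hsub : K p \ U ⊆ Uᶜ := fun z hz => hz.2
      have : Metric.infDist x Uᶜ ≤ Metric.infDist x (K p \ U) :=
        Metric.infDist_le_infDist_of_subset hsub hne
      exact Real.rpow_le_rpow_of_nonpos hm0
        (le_trans (min_le_right _ _) this) (by linarith [(hN p).le])
  have step2 : (min 1 (Metric.infDist x Uᶜ)) ^ (-(N p)) ≤
      (min 1 (Metric.infDist x Uᶜ)) ^ (-(1 + ∑ p ∈ t, N p)) := by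
    apply Real.rpow_le_rpow_of_exponent_ge hm0 hm1
    have : N p ≤ ∑ p ∈ t, N p :=
      Finset.single_le_sum (fun q _ => (hN q).le) hpt
    linarith
  have hCp : C p ≤ 1 + ∑ p ∈ t, C p := by
    have : C p ≤ ∑ p ∈ t, C p :=
      Finset.single_le_sum (fun q _ => (hC q).le) hpt
    linarith
  calc |g x| ≤ C p * Metric.infDist x (K p \ U) ^ (-(N p)) :=
        hb p x ⟨hpx, hxU⟩
    _ ≤ C p * (min 1 (Metric.infDist x Uᶜ)) ^ (-(1 + ∑ p ∈ t, N p)) := by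
        apply mul_le_mul_of_nonneg_left (le_trans step1 step2) (hC p).le
    _ ≤ (1 + ∑ p ∈ t, C p) * (min 1 (Metric.infDist x Uᶜ)) ^ (-(1 + ∑ p ∈ t, N p)) := by
        apply mul_le_mul_of_nonneg_right hCp (by positivity)

lemma aux_polyB {n : ℕ} {U : Set (EuclideanSpace ℝ (Fin n))} (hU : IsOpen U)
    (hq : Uᶜ.Nonempty) (g : EuclideanSpace ℝ (Fin n) → ℝ)
    (h : ∀ S : Set (EuclideanSpace ℝ (Fin n)), IsCompact S →
      ∃ C N : ℝ, 0 < C ∧ 0 < N ∧ ∀ x ∈ S ∩ U,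
        |g x| ≤ C * (min 1 (Metric.infDist x Uᶜ)) ^ (-N))
    (p : EuclideanSpace ℝ (Fin n)) : HasPolyGrowthAt n U g p := by
  obtain ⟨q₀, hq₀⟩ := hq
  set R : ℝ := max 1 (dist p q₀) with hR
  have hR1 : (1:ℝ) ≤ R := le_max_left _ _
  have hRq : dist p q₀ ≤ R := le_max_right _ _
  have hR0 : (0:ℝ) < R := lt_of_lt_of_le one_pos hR1
  obtain ⟨C, N, hC, hN, hb⟩ := h (closedBall p R) (isCompact_closedBall p R)
  set K : Set (EuclideanSpace ℝ (Fin n)) :=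
    closedBall p R ∪ (Uᶜ ∩ closedBall p (3 * R)) with hK
  have hq₀K : q₀ ∈ K \ U := by
    constructor
    · exact Or.inr ⟨hq₀, by rw [mem_closedBall, dist_comm]; linarith⟩
    · simpa using hq₀
  refine ⟨K, ((isCompact_closedBall p R).union
      ((isCompact_closedBall p (3 * R)).inter_left hU.isClosed_compl)),
    Filter.mem_of_superset (closedBall_mem_nhds p hR0) subset_union_left,
    C * (4 * R) ^ N, N, by positivity, hN, ?_⟩
  intro x hx
  have hxU : x ∈ U := hx.2
  have hxB : x ∈ closedBall p R := by
    rcases hx.1 with h1 | h2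
    · exact h1
    · exact absurd hxU (by simpa using h2.1)
  have hδ : 0 < Metric.infDist x Uᶜ :=
    (hU.isClosed_compl.notMem_iff_infDist_pos ⟨q₀, hq₀⟩).1 (by simpa using hxU)
  set m : ℝ := min 1 (Metric.infDist x Uᶜ) with hm
  have hm0 : 0 < m := lt_min one_pos hδ
  have hm1 : m ≤ 1 := min_le_left _ _
  have hKsub : K \ U ⊆ Uᶜ := fun z hz => hz.2
  have hd_pos : 0 < Metric.infDist x (K \ U) :=
    lt_of_lt_of_le hδ (Metric.infDist_le_infDist_of_subset hKsub ⟨q₀, hq₀K⟩)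
  have hclaim : Metric.infDist x (K \ U) ≤ 4 * R * m := by
    rcases le_or_gt 1 (Metric.infDist x Uᶜ) with hcase | hcase
    · have hm_eq : m = 1 := min_eq_left hcase
      have : Metric.infDist x (K \ U) ≤ dist x q₀ := Metric.infDist_le_dist_of_mem hq₀K
      have hdxq : dist x q₀ ≤ dist x p + dist p q₀ := dist_triangle _ _ _
      have hxp : dist x p ≤ R := by rwa [mem_closedBall] at hxB
      rw [hm_eq]
      linarith
    · have hm_eq : m = Metric.infDist x Uᶜ := min_eq_right hcase.le
      have key : Metric.infDist x (K \ U) ≤ Metric.infDist x Uᶜ := by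
        apply le_of_forall_pos_le_add
        intro ε hε
        set ε' : ℝ := min ε (1 - Metric.infDist x Uᶜ) with hε'
        have hε'0 : 0 < ε' := lt_min hε (by linarith)
        have : Metric.infDist x Uᶜ < Metric.infDist x Uᶜ + ε' := by linarith
        obtain ⟨z, hzU, hzd⟩ := (Metric.infDist_lt_iff ⟨q₀, hq₀⟩).1 this
        have hz3R : z ∈ closedBall p (3 * R) := by
          rw [mem_closedBall, dist_comm]
          have h1 : dist x z ≤ 1 := by
            have : ε' ≤ 1 - Metric.infDist x Uᶜ := min_le_right _ _
            linarith
          have hxp : dist x p ≤ R := by rwa [mem_closedBall] at hxB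
          calc dist p z = dist z p := dist_comm _ _
            _ ≤ dist z x + dist x p := dist_triangle _ _ _
            _ = dist x z + dist x p := by rw [dist_comm z x]
            _ ≤ 1 + R := by linarith
            _ ≤ 3 * R := by linarith
        have hzK : z ∈ K \ U := ⟨Or.inr ⟨hzU, hz3R⟩, hzU⟩
        have : Metric.infDist x (K \ U) ≤ dist x z := Metric.infDist_le_dist_of_mem hzK
        have hε'ε : ε' ≤ ε := min_le_left _ _
        linarith
      rw [hm_eq]
      nlinarith
  have hdiv : Metric.infDist x (K \ U) / (4 * R) ≤ m := by
    rw [div_le_iff₀ (by positivity)]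
    linarith
  have hstep : m ^ (-N) ≤ (Metric.infDist x (K \ U) / (4 * R)) ^ (-N) :=
    Real.rpow_le_rpow_of_nonpos (by positivity) hdiv (by linarith)
  have heq : (Metric.infDist x (K \ U) / (4 * R)) ^ (-N)
      = (4 * R) ^ N * Metric.infDist x (K \ U) ^ (-N) := by
    rw [Real.div_rpow hd_pos.le (by positivity), Real.rpow_neg (by positivity : (0:ℝ) ≤ 4 * R)]
    field_simp
  calc |g x| ≤ C * m ^ (-N) := hb x ⟨hxB, hxU⟩
    _ ≤ C * ((4 * R) ^ N * Metric.infDist x (K \ U) ^ (-N)) := by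
        rw [← heq]; exact mul_le_mul_of_nonneg_left hstep hC.le
    _ = C * (4 * R) ^ N * Metric.infDist x (K \ U) ^ (-N) := by ring

theorem stmt7 (n : ℕ) (U : Set (EuclideanSpace ℝ (Fin n))) (hU : IsOpen U)
    (f : EuclideanSpace ℝ (Fin n) → ℝ)
    (hf : ContDiffOn ℝ (⊤ : ℕ∞) f U)
    (hne : ∀ x ∈ U, f x ≠ 0)
    (hgrowth : ∀ (k : ℕ) (p : EuclideanSpace ℝ (Fin n)),
      HasPolyGrowthAt n U (fun x => ‖iteratedFDerivWithin ℝ k f U x‖) p)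
    (hinv : ∀ p : EuclideanSpace ℝ (Fin n),
      HasPolyGrowthAt n U (fun x => 1 / f x) p) :
    ContDiffOn ℝ (⊤ : ℕ∞) (fun x => 1 / f x) U ∧
    ∀ (k : ℕ) (p : EuclideanSpace ℝ (Fin n)),
      HasPolyGrowthAt n U
        (fun x => ‖iteratedFDerivWithin ℝ k (fun y => 1 / f y) U x‖) p := by
  by_cases hq : Uᶜ.Nonempty
  swap
  · -- U = univ : contradiction with hinv
    exfalso
    have hUuniv : U = univ := by
      rw [← compl_empty_iff]
      exact not_nonempty_iff_eq_empty.1 hq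
    obtain ⟨K, hKc, hKn, C, N, hC, hN, hb⟩ := hinv 0
    have h0U : (0 : EuclideanSpace ℝ (Fin n)) ∈ U := by rw [hUuniv]; trivial
    have hKU : K \ U = ∅ := by rw [hUuniv, diff_univ]
    have hb0 := hb 0 ⟨mem_of_mem_nhds hKn, h0U⟩
    rw [hKU, Metric.infDist_empty, Real.zero_rpow (neg_ne_zero.2 hN.ne'), mul_zero] at hb0
    have : (1 : ℝ) / f 0 = 0 := abs_eq_zero.1 (le_antisymm hb0 (abs_nonneg _))
    rw [one_div, inv_eq_zero] at this
    exact hne 0 h0U this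
  refine ⟨?_, ?_⟩
  · have h1 : ContDiffOn ℝ (⊤ : ℕ∞) (fun x => (f x)⁻¹) U := hf.inv hne
    simpa only [one_div] using h1
  intro k p
  apply aux_polyB hU hq
  intro S hS
  have hAj : ∀ j : Fin (k + 1), ∃ C N : ℝ, 0 < C ∧ 0 < N ∧ ∀ x ∈ S ∩ U,
      |‖iteratedFDerivWithin ℝ (j : ℕ) f U x‖| ≤ C * (min 1 (Metric.infDist x Uᶜ)) ^ (-N) :=
    fun j => aux_polyA hU hq _ (hgrowth j) S hS
  choose Cf Nf hCf hNf hbf using hAj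
  obtain ⟨Ci, Ni, hCi, hNi, hbi⟩ := aux_polyA hU hq _ hinv S hS
  set C₀ : ℝ := 1 + Ci + ∑ j, Cf j with hC₀def
  set N₀ : ℝ := 1 + Ni + ∑ j, Nf j with hN₀def
  have hCsum : (0:ℝ) ≤ ∑ j, Cf j := Finset.sum_nonneg fun j _ => (hCf j).le
  have hNsum : (0:ℝ) ≤ ∑ j, Nf j := Finset.sum_nonneg fun j _ => (hNf j).le
  have hC₀1 : (1:ℝ) ≤ C₀ := by rw [hC₀def]; linarith
  have hN₀0 : (0:ℝ) < N₀ := by rw [hN₀def]; linarith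
  refine ⟨((Nat.factorial k : ℕ) : ℝ) ^ 2 * C₀ ^ (2 * k + 1), N₀ * (2 * k + 1),
    by positivity, by positivity, ?_⟩
  intro x hx
  have hxU : x ∈ U := hx.2
  have hδ : 0 < Metric.infDist x Uᶜ :=
    (hU.isClosed_compl.notMem_iff_infDist_pos hq).1 (by simpa using hxU)
  set m : ℝ := min 1 (Metric.infDist x Uᶜ) with hmdef
  have hm0 : 0 < m := lt_min one_pos hδ
  have hm1 : m ≤ 1 := min_le_left _ _
  set A : ℝ := C₀ * m ^ (-N₀) with hAdef
  have hmN : 1 ≤ m ^ (-N₀) :=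
    Real.one_le_rpow_of_pos_of_le_one_of_nonpos hm0 hm1 (by linarith)
  have hA1 : 1 ≤ A := by
    calc (1:ℝ) = 1 * 1 := by ring
      _ ≤ C₀ * m ^ (-N₀) := mul_le_mul hC₀1 hmN one_pos.le (by linarith)
  have hmono : ∀ c N' : ℝ, 0 < c → 0 < N' → c ≤ C₀ → N' ≤ N₀ →
      c * m ^ (-N') ≤ A := by
    intro c N' hc hN' hcC hNN
    have h1 : m ^ (-N') ≤ m ^ (-N₀) :=
      Real.rpow_le_rpow_of_exponent_ge hm0 hm1 (by linarith)
    exact mul_le_mul hcC h1 (by positivity) (by linarith)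
  have hfd : ∀ i, i ≤ k → ‖iteratedFDerivWithin ℝ i f U x‖ ≤ A := by
    intro i hi
    have hb' := hbf ⟨i, by omega⟩ x hx
    rw [abs_norm] at hb'
    refine le_trans hb' (hmono _ _ (hCf _) (hNf _) ?_ ?_)
    · rw [hC₀def]
      have : Cf ⟨i, by omega⟩ ≤ ∑ j, Cf j :=
        Finset.single_le_sum (fun j _ => (hCf j).le) (Finset.mem_univ _)
      linarith
    · rw [hN₀def]
      have : Nf ⟨i, by omega⟩ ≤ ∑ j, Nf j :=
        Finset.single_le_sum (fun j _ => (hNf j).le) (Finset.mem_univ _)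
      linarith
  have hinvx : |f x|⁻¹ ≤ A := by
    have hb' := hbi x hx
    rw [one_div, abs_inv] at hb'
    refine le_trans hb' (hmono _ _ hCi hNi ?_ ?_)
    · rw [hC₀def]; linarith
    · rw [hN₀def]; linarith
  have hCb : ∀ i, i ≤ k → ‖iteratedFDerivWithin ℝ i (Inv.inv : ℝ → ℝ) ({0}ᶜ : Set ℝ) (f x)‖
      ≤ ((Nat.factorial k : ℕ) : ℝ) * A ^ (k + 1) := by
    intro i hi
    have hfx : f x ∈ ({0}ᶜ : Set ℝ) := by simpa using hne x hxU
    rw [iteratedFDerivWithin_of_isOpen i isOpen_compl_singleton hfx]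
    refine le_trans (aux_norm_inv_deriv i (f x) (hne x hxU) hinvx) ?_
    have h1 : ((Nat.factorial i : ℕ) : ℝ) ≤ ((Nat.factorial k : ℕ) : ℝ) := by
      exact_mod_cast Nat.factorial_le hi
    have h2 : A ^ (i + 1) ≤ A ^ (k + 1) :=
      pow_le_pow_right₀ hA1 (by omega)
    exact mul_le_mul h1 h2 (by positivity) (by positivity)
  have hDb : ∀ i, 1 ≤ i → i ≤ k → ‖iteratedFDerivWithin ℝ i f U x‖ ≤ A ^ i := by
    intro i h1 h2
    exact (hfd i h2).trans (le_self_pow₀ hA1 (by omega))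
  have hmaps : Set.MapsTo f U ({0}ᶜ : Set ℝ) := fun y hy => by simpa using hne y hy
  have hcomp := norm_iteratedFDerivWithin_comp_le (𝕜 := ℝ)
    (g := (Inv.inv : ℝ → ℝ)) (f := f) (n := k) (s := U) (t := ({0}ᶜ : Set ℝ))
    (contDiffOn_inv ℝ) hf (by exact_mod_cast le_top)
    isOpen_compl_singleton.uniqueDiffOn hU.uniqueDiffOn hmaps hxU hCb hDb
  have hfun : (fun y => 1 / f y) = ((Inv.inv : ℝ → ℝ) ∘ f) := by
    funext y; simp [Function.comp]
  rw [hfun, abs_norm]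
  refine le_trans hcomp (le_of_eq ?_)
  have hAeq : A ^ (2 * k + 1) = C₀ ^ (2 * k + 1) * m ^ (-(N₀ * (2 * k + 1))) := by
    rw [hAdef, mul_pow, ← Real.rpow_natCast (m ^ (-N₀)) (2 * k + 1),
      ← Real.rpow_mul hm0.le]
    congr 2
    push_cast
    ring
  calc ((Nat.factorial k : ℕ) : ℝ) * (((Nat.factorial k : ℕ) : ℝ) * A ^ (k + 1)) * A ^ k
      = ((Nat.factorial k : ℕ) : ℝ) ^ 2 * A ^ (2 * k + 1) := by
        rw [show 2 * k + 1 = (k + 1) + k by omega, pow_add]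
        ring
    _ = ((Nat.factorial k : ℕ) : ℝ) ^ 2 * C₀ ^ (2 * k + 1) * m ^ (-(N₀ * (2 * k + 1))) := by
        rw [hAeq]; ring
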